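/- Let 𝒞₁ = λz.μa.(a (z λy.(a y))). For every term u and every finite sequence t̄ of E-terms, ((𝒞₁ u) t̄) ▷* μa.(a ((u θ₁) t̄)), where θ₁ = λy.(a (y t̄)), and for every term v₁, (θ₁ v₁) ▷* (a (v₁ t̄)). -/

import Mathlib

/-! # The classical propositional natural deduction (λμ-calculus with product and co-product)

Terms:  T ::= x | λx.T | (T E) | ⟨T,T⟩ | ω₁T | ω₂T | μa.T | (a T)
E-terms: E ::= T | π₁ | π₂ | [x.T, x.T]
λ-variables and μ-variables are drawn from two disjoint alphabets (both modelled by ℕ). -/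

mutual
inductive Trm : Type
| var  : ℕ → Trm                 -- λ-variable x
| lam  : ℕ → Trm → Trm           -- λx.t
| app  : Trm → Etrm → Trm        -- (t ε)
| pair : Trm → Trm → Trm         -- ⟨t,u⟩
| inl  : Trm → Trm               -- ω₁ t
| inr  : Trm → Trm               -- ω₂ t
| mu   : ℕ → Trm → Trm           -- μa.t
| mvar : ℕ → Trm → Trm           -- (a t)

inductive Etrm : Type
| tm   : Trm → Etrm              -- a term used as an E-term
| pi1  : Etrm                    -- π₁
| pi2  : Etrm                    -- π₂
| case : ℕ → Trm → ℕ → Trm → Etrm -- [x.u, y.v]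
end

/-- Iterated application `(t w̄)` of a term to a finite sequence of E-terms. -/
def appSeq (t : Trm) (ws : List Etrm) : Trm := ws.foldl Trm.app t

mutual
/-- Substitution `t[x := v]` of a term for a λ-variable (capture-permitting,
    but not substituting bound occurrences). -/
def substT (x : ℕ) (v : Trm) : Trm → Trm
| .var y => if y = x then v else .var y
| .lam y t => if y = x then .lam y t else .lam y (substT x v t)
| .app t e => .app (substT x v t) (substE x v e)
| .pair t u => .pair (substT x v t) (substT x v u)
| .inl t => .inl (substT x v t)
| .inr t => .inr (substT x v t)
| .mu a t => .mu a (substT x v t)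
| .mvar a t => .mvar a (substT x v t)

def substE (x : ℕ) (v : Trm) : Etrm → Etrm
| .tm t => .tm (substT x v t)
| .pi1 => .pi1
| .pi2 => .pi2
| .case y u z w =>
    .case y (if y = x then u else substT x v u) z (if z = x then w else substT x v w)
end

mutual
/-- μ-substitution `t[a :=* ε]` : replace inductively each subterm `(a v)` by `(a (v ε))`. -/
def musubstT (a : ℕ) (e : Etrm) : Trm → Trm
| .var y => .var y
| .lam y t => .lam y (musubstT a e t)
| .app t f => .app (musubstT a e t) (musubstE a e f)
| .pair t u => .pair (musubstT a e t) (musubstT a e u)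
| .inl t => .inl (musubstT a e t)
| .inr t => .inr (musubstT a e t)
| .mu b t => if b = a then .mu b t else .mu b (musubstT a e t)
| .mvar b t => if b = a then .mvar b (.app (musubstT a e t) e) else .mvar b (musubstT a e t)

def musubstE (a : ℕ) (e : Etrm) : Etrm → Etrm
| .tm t => .tm (musubstT a e t)
| .pi1 => .pi1
| .pi2 => .pi2
| .case y u z w => .case y (musubstT a e u) z (musubstT a e w)
end

mutual
/-- The one step reduction `▷`, generated compatibly with all term constructors. -/
inductive RedT : Trm → Trm → Prop
| beta (x : ℕ) (u v : Trm) : RedT (.app (.lam x u) (.tm v)) (substT x v u)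
| proj1 (t₁ t₂ : Trm) : RedT (.app (.pair t₁ t₂) .pi1) t₁
| proj2 (t₁ t₂ : Trm) : RedT (.app (.pair t₁ t₂) .pi2) t₂
| case1 (t : Trm) (x₁ : ℕ) (u₁ : Trm) (x₂ : ℕ) (u₂ : Trm) :
    RedT (.app (.inl t) (.case x₁ u₁ x₂ u₂)) (substT x₁ t u₁)
| case2 (t : Trm) (x₁ : ℕ) (u₁ : Trm) (x₂ : ℕ) (u₂ : Trm) :
    RedT (.app (.inr t) (.case x₁ u₁ x₂ u₂)) (substT x₂ t u₂)
| perm (t : Trm) (x₁ : ℕ) (u₁ : Trm) (x₂ : ℕ) (u₂ : Trm) (e : Etrm) :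
    RedT (.app (.app t (.case x₁ u₁ x₂ u₂)) e)
         (.app t (.case x₁ (.app u₁ e) x₂ (.app u₂ e)))
| mu (a : ℕ) (t : Trm) (e : Etrm) : RedT (.app (.mu a t) e) (.mu a (musubstT a e t))
| lamC (x : ℕ) {t t' : Trm} : RedT t t' → RedT (.lam x t) (.lam x t')
| appL {t t' : Trm} (e : Etrm) : RedT t t' → RedT (.app t e) (.app t' e)
| appR (t : Trm) {e e' : Etrm} : RedE e e' → RedT (.app t e) (.app t e')
| pairL {t t' : Trm} (u : Trm) : RedT t t' → RedT (.pair t u) (.pair t' u)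
| pairR (t : Trm) {u u' : Trm} : RedT u u' → RedT (.pair t u) (.pair t u')
| inlC {t t' : Trm} : RedT t t' → RedT (.inl t) (.inl t')
| inrC {t t' : Trm} : RedT t t' → RedT (.inr t) (.inr t')
| muC (a : ℕ) {t t' : Trm} : RedT t t' → RedT (.mu a t) (.mu a t')
| mvarC (a : ℕ) {t t' : Trm} : RedT t t' → RedT (.mvar a t) (.mvar a t')

inductive RedE : Etrm → Etrm → Prop
| tm {t t' : Trm} : RedT t t' → RedE (.tm t) (.tm t')
| caseL (x₁ : ℕ) {u₁ u₁' : Trm} (x₂ : ℕ) (u₂ : Trm) :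
    RedT u₁ u₁' → RedE (.case x₁ u₁ x₂ u₂) (.case x₁ u₁' x₂ u₂)
| caseR (x₁ : ℕ) (u₁ : Trm) (x₂ : ℕ) {u₂ u₂' : Trm} :
    RedT u₂ u₂' → RedE (.case x₁ u₁ x₂ u₂) (.case x₁ u₁ x₂ u₂')
end

/-- `t ▷* t'` : reflexive transitive closure of the one step reduction. -/
def Reds : Trm → Trm → Prop := Relation.ReflTransGen RedT

mutual
/-- The set of free μ-variables of a term. -/
def muFreeT : Trm → Set ℕ
| .var _ => ∅
| .lam _ t => muFreeT t
| .app t e => muFreeT t ∪ muFreeE e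
| .pair t u => muFreeT t ∪ muFreeT u
| .inl t => muFreeT t
| .inr t => muFreeT t
| .mu a t => muFreeT t \ {a}
| .mvar a t => insert a (muFreeT t)

def muFreeE : Etrm → Set ℕ
| .tm t => muFreeT t
| .pi1 => ∅
| .pi2 => ∅
| .case _ u _ w => muFreeT u ∪ muFreeT w
end

mutual
/-- The set of free λ-variables of a term. -/
def lamFreeT : Trm → Set ℕ
| .var y => {y}
| .lam y t => lamFreeT t \ {y}
| .app t e => lamFreeT t ∪ lamFreeE e
| .pair t u => lamFreeT t ∪ lamFreeT u
| .inl t => lamFreeT t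
| .inr t => lamFreeT t
| .mu _ t => lamFreeT t
| .mvar _ t => lamFreeT t

def lamFreeE : Etrm → Set ℕ
| .tm t => lamFreeT t
| .pi1 => ∅
| .pi2 => ∅
| .case y u z w => (lamFreeT u \ {y}) ∪ (lamFreeT w \ {z})
end

/-- A term is closed when it has no free λ-variable and no free μ-variable. -/
def ClosedT (t : Trm) : Prop := lamFreeT t = ∅ ∧ muFreeT t = ∅

/-! ## Formulas and typing -/

inductive Fml : Type
| var : ℕ → Fml                  -- propositional variable
| bot : Fml                      -- ⊥
| arr : Fml → Fml → Fml          -- A → B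
| and : Fml → Fml → Fml          -- A ∧ B
| or  : Fml → Fml → Fml          -- A ∨ B

/-- `¬A` is defined as `A → ⊥`. -/
def Fml.neg (A : Fml) : Fml := .arr A .bot

/-- A context is a set of declarations, one formula (at most) for each variable. -/
abbrev Ctx := ℕ → Option Fml

def Ctx.empty : Ctx := fun _ => none

/-- `Γ, x : A`. -/
def Ctx.upd (Γ : Ctx) (x : ℕ) (A : Fml) : Ctx := fun y => if y = x then some A else Γ y

/-- The typing judgment `Γ ⊢ t : A ; Δ` of classical propositional natural deduction. -/
inductive Typ : Ctx → Trm → Fml → Ctx → Prop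
| ax {Γ : Ctx} {Δ : Ctx} {x : ℕ} {A : Fml} :
    Γ x = some A → Typ Γ (.var x) A Δ
| arrI {Γ Δ x t A B} :
    Typ (Γ.upd x A) t B Δ → Typ Γ (.lam x t) (.arr A B) Δ
| arrE {Γ Δ u v A B} :
    Typ Γ u (.arr A B) Δ → Typ Γ v A Δ → Typ Γ (.app u (.tm v)) B Δ
| andI {Γ Δ u v A B} :
    Typ Γ u A Δ → Typ Γ v B Δ → Typ Γ (.pair u v) (.and A B) Δ
| andE1 {Γ Δ t A B} :
    Typ Γ t (.and A B) Δ → Typ Γ (.app t .pi1) A Δ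
| andE2 {Γ Δ t A B} :
    Typ Γ t (.and A B) Δ → Typ Γ (.app t .pi2) B Δ
| orI1 {Γ Δ t A B} :
    Typ Γ t A Δ → Typ Γ (.inl t) (.or A B) Δ
| orI2 {Γ Δ t A B} :
    Typ Γ t B Δ → Typ Γ (.inr t) (.or A B) Δ
| orE {Γ Δ t x u y v A B C} :
    Typ Γ t (.or A B) Δ → Typ (Γ.upd x A) u C Δ → Typ (Γ.upd y B) v C Δ →
    Typ Γ (.app t (.case x u y v)) C Δ
| absI {Γ Δ a t A} :
    Δ a = some A → Typ Γ t A Δ → Typ Γ (.mvar a t) .bot Δ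
| absE {Γ Δ a t A} :
    Typ Γ t .bot (Δ.upd a A) → Typ Γ (.mu a t) A Δ

/-! ## The realisability semantics -/

/-- A set of terms `S` is μ-saturated. -/
def MuSaturated (S : Set Trm) : Prop :=
  (∀ u v : Trm, u ∈ S → Reds v u → v ∈ S) ∧
  (∀ (a : ℕ) (t : Trm), t ∈ S → Trm.mu a t ∈ S ∧ Trm.mvar a t ∈ S)

/-- `K → L = {t : (t u) ∈ L for each u ∈ K}`. -/
def arrS (K L : Set Trm) : Set Trm := {t | ∀ u ∈ K, Trm.app t (.tm u) ∈ L}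

/-- `K ∧ L = {t : (t π₁) ∈ K and (t π₂) ∈ L}`. -/
def andS (K L : Set Trm) : Set Trm := {t | Trm.app t .pi1 ∈ K ∧ Trm.app t .pi2 ∈ L}

/-- `K ∨ L` (relative to a μ-saturated set `S`). -/
def orS (S K L : Set Trm) : Set Trm :=
  {t | ∀ (x y : ℕ) (u v : Trm),
      (∀ r ∈ K, substT x r u ∈ S) → (∀ s ∈ L, substT y s v ∈ S) →
      Trm.app t (.case x u y v) ∈ S}

/-- `X → S = {t : (t w̄) ∈ S for all w̄ ∈ X}`, for `X` a set of finite sequences of E-terms. -/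
def seqArr (X : Set (List Etrm)) (S : Set Trm) : Set Trm := {t | ∀ w ∈ X, appSeq t w ∈ S}

/-- Membership in the model `M = ⟨S; {R i}_{i}⟩`: the smallest collection of sets of terms
    containing `S` and the `R i` and closed under the constructors `→`, `∧` and `∨`. -/
inductive InModel {ι : Type} (S : Set Trm) (R : ι → Set Trm) : Set Trm → Prop
| base : InModel S R S
| rel (i : ι) : InModel S R (R i)
| arr {K L : Set Trm} : InModel S R K → InModel S R L → InModel S R (arrS K L)
| and {K L : Set Trm} : InModel S R K → InModel S R L → InModel S R (andS K L)
| or {K L : Set Trm} : InModel S R K → InModel S R L → InModel S R (orS S K L)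

/-- `G^⊥ = ∪ {X : G = X → S}`. -/
def perp (S G : Set Trm) : Set (List Etrm) := {w | ∃ X : Set (List Etrm), G = seqArr X S ∧ w ∈ X}

/-- The extension of an interpretation `I` of the propositional variables to all formulas
    (relative to the μ-saturated set `S` of the model). -/
def interp (S : Set Trm) (I : ℕ → Set Trm) : Fml → Set Trm
| .var p => I p
| .bot => S
| .arr A B => arrS (interp S I A) (interp S I B)
| .and A B => andS (interp S I A) (interp S I B)
| .or A B => orS S (interp S I A) (interp S I B)

/-! ## Simultaneous substitution (for the adequation lemma) -/

mutual
/-- Simultaneous substitution `t[x₁:=u₁,…,xₙ:=uₙ, a₁:=*v̄₁,…,a_m:=*v̄_m]`, given by an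
    assignment `σ` of terms to λ-variables and an assignment `τ` of finite sequences of
    E-terms to μ-variables. -/
def msubstT (σ : ℕ → Option Trm) (τ : ℕ → Option (List Etrm)) : Trm → Trm
| .var y => (σ y).getD (.var y)
| .lam y t => .lam y (msubstT (fun z => if z = y then none else σ z) τ t)
| .app t e => .app (msubstT σ τ t) (msubstE σ τ e)
| .pair t u => .pair (msubstT σ τ t) (msubstT σ τ u)
| .inl t => .inl (msubstT σ τ t)
| .inr t => .inr (msubstT σ τ t)
| .mu b t => .mu b (msubstT σ (fun c => if c = b then none else τ c) t)
| .mvar b t =>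
    match τ b with
    | some w => .mvar b (appSeq (msubstT σ τ t) w)
    | none => .mvar b (msubstT σ τ t)

def msubstE (σ : ℕ → Option Trm) (τ : ℕ → Option (List Etrm)) : Etrm → Etrm
| .tm t => .tm (msubstT σ τ t)
| .pi1 => .pi1
| .pi2 => .pi2
| .case y u z w =>
    .case y (msubstT (fun z' => if z' = y then none else σ z') τ u)
          z (msubstT (fun z' => if z' = z then none else σ z') τ w)
end

/-- The assignment determined by a finite family: `y ↦ c i` if `y = x i`. -/
noncomputable def finAssign {α : Type} {n : ℕ} (x : Fin n → ℕ) (c : Fin n → α) :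
    ℕ → Option α :=
  fun y => if h : ∃ i, x i = y then some (c h.choose) else none

/-! ## Operational behaviour -/

/-- `M_t`: the smallest set of terms containing `t` and closed under `u ↦ μa.u` and
    `u ↦ (a u)`; its elements are written `μ̲.t`. -/
inductive MuCl (t : Trm) : Trm → Prop
| base : MuCl t t
| mu (a : ℕ) {u : Trm} : MuCl t u → MuCl t (.mu a u)
| mvar (a : ℕ) {u : Trm} : MuCl t u → MuCl t (.mvar a u)

/-- `w ▷* μ̲.t` : `w` reduces to some element of `M_t`. -/
def RedToMu (w t : Trm) : Prop := ∃ s, MuCl t s ∧ Reds w s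

/-- `𝒞₁ = λz.μa.(a (z λy.(a y)))`  (λ-variables `z = 0`, `y = 1`; μ-variable `a = 0`). -/
def calC1 : Trm :=
  .lam 0 (.mu 0 (.mvar 0 (.app (.var 0) (.tm (.lam 1 (.mvar 0 (.var 1)))))))

/-- `θ₁ = λy.(a (y t̄))`. -/
def theta1 (tb : List Etrm) : Trm := .lam 1 (.mvar 0 (appSeq (.var 1) tb))

/-! ### Auxiliary lemmas -/

mutual
theorem substT_of_not_free (x : ℕ) (v : Trm) :
    ∀ t : Trm, x ∉ lamFreeT t → substT x v t = t
  | .var y, h => by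
      simp [lamFreeT] at h; simp [substT, Ne.symm h]
  | .lam y t, h => by
      simp [lamFreeT, Set.mem_diff] at h
      by_cases hy : y = x
      · simp [substT, hy]
      · have ht : x ∉ lamFreeT t := fun hx => hy ((h hx).symm)
        simp [substT, hy, substT_of_not_free x v t ht]
  | .app t e, h => by
      simp [lamFreeT] at h
      simp [substT, substT_of_not_free x v t h.1, substE_of_not_free x v e h.2]
  | .pair t u, h => by
      simp [lamFreeT] at h
      simp [substT, substT_of_not_free x v t h.1, substT_of_not_free x v u h.2]
  | .inl t, h => by
      simp [lamFreeT] at h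
      simp [substT, substT_of_not_free x v t h]
  | .inr t, h => by
      simp [lamFreeT] at h
      simp [substT, substT_of_not_free x v t h]
  | .mu a t, h => by
      simp [lamFreeT] at h
      simp [substT, substT_of_not_free x v t h]
  | .mvar a t, h => by
      simp [lamFreeT] at h
      simp [substT, substT_of_not_free x v t h]

theorem substE_of_not_free (x : ℕ) (v : Trm) :
    ∀ e : Etrm, x ∉ lamFreeE e → substE x v e = e
  | .tm t, h => by
      simp [lamFreeE] at h
      simp [substE, substT_of_not_free x v t h]
  | .pi1, _ => rfl
  | .pi2, _ => rfl
  | .case y u z w, h => by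
      simp [lamFreeE, Set.mem_diff] at h
      by_cases hy : y = x
      · by_cases hz : z = x
        · simp [substE, hy, hz]
        · have hw : x ∉ lamFreeT w := fun hx => (hz (h.2 hx).symm).elim
          simp [substE, hy, hz, substT_of_not_free x v w hw]
      · have hu : x ∉ lamFreeT u := fun hx => (hy (h.1 hx).symm).elim
        by_cases hz : z = x
        · simp [substE, hy, hz, substT_of_not_free x v u hu]
        · have hw : x ∉ lamFreeT w := fun hx => (hz (h.2 hx).symm).elim
          simp [substE, hy, hz, substT_of_not_free x v u hu,
            substT_of_not_free x v w hw]
end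

mutual
theorem musubstT_of_not_free (a : ℕ) (e : Etrm) :
    ∀ t : Trm, a ∉ muFreeT t → musubstT a e t = t
  | .var y, _ => rfl
  | .lam y t, h => by
      simp [muFreeT] at h
      simp [musubstT, musubstT_of_not_free a e t h]
  | .app t f, h => by
      simp [muFreeT] at h
      simp [musubstT, musubstT_of_not_free a e t h.1, musubstE_of_not_free a e f h.2]
  | .pair t u, h => by
      simp [muFreeT] at h
      simp [musubstT, musubstT_of_not_free a e t h.1, musubstT_of_not_free a e u h.2]
  | .inl t, h => by
      simp [muFreeT] at h
      simp [musubstT, musubstT_of_not_free a e t h]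
  | .inr t, h => by
      simp [muFreeT] at h
      simp [musubstT, musubstT_of_not_free a e t h]
  | .mu b t, h => by
      simp [muFreeT, Set.mem_diff] at h
      by_cases hb : b = a
      · simp [musubstT, hb]
      · have ht : a ∉ muFreeT t := fun hx => (hb (h hx).symm).elim
        simp [musubstT, hb, musubstT_of_not_free a e t ht]
  | .mvar b t, h => by
      simp [muFreeT] at h
      have hb : b ≠ a := fun hb => h.1 hb.symm
      simp [musubstT, hb, musubstT_of_not_free a e t h.2]

theorem musubstE_of_not_free (a : ℕ) (e : Etrm) :
    ∀ f : Etrm, a ∉ muFreeE f → musubstE a e f = f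
  | .tm t, h => by
      simp [muFreeE] at h
      simp [musubstE, musubstT_of_not_free a e t h]
  | .pi1, _ => rfl
  | .pi2, _ => rfl
  | .case y u z w, h => by
      simp [muFreeE] at h
      simp [musubstE, musubstT_of_not_free a e u h.1, musubstT_of_not_free a e w h.2]
end

theorem appSeq_append (t : Trm) (ws₁ ws₂ : List Etrm) :
    appSeq t (ws₁ ++ ws₂) = appSeq (appSeq t ws₁) ws₂ := by
  simp [appSeq, List.foldl_append]

theorem substT_appSeq (x : ℕ) (v : Trm) :
    ∀ (ws : List Etrm) (t : Trm),
      substT x v (appSeq t ws) = appSeq (substT x v t) (ws.map (substE x v)) := by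
  intro ws
  induction ws with
  | nil => intro t; rfl
  | cons e ws ih =>
      intro t
      show substT x v (appSeq (.app t e) ws) = _
      rw [ih]; rfl

theorem musubstT_appSeq (a : ℕ) (e : Etrm) :
    ∀ (ws : List Etrm) (t : Trm),
      musubstT a e (appSeq t ws) = appSeq (musubstT a e t) (ws.map (musubstE a e)) := by
  intro ws
  induction ws with
  | nil => intro t; rfl
  | cons f ws ih =>
      intro t
      show musubstT a e (appSeq (.app t f) ws) = _
      rw [ih]; rfl

theorem reds_appSeq {t t' : Trm} (h : Reds t t') (ws : List Etrm) :
    Reds (appSeq t ws) (appSeq t' ws) := by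
  induction ws generalizing t t' with
  | nil => exact h
  | cons e ws ih =>
      refine ih ?_
      exact Relation.ReflTransGen.lift (fun s => Trm.app s e)
        (fun _ _ hr => RedT.appL e hr) _ _ h

theorem state_reds (u : Trm) (hu : (0 : ℕ) ∉ muFreeT u) :
    ∀ (tb p : List Etrm), (∀ e ∈ p, (0 : ℕ) ∉ muFreeE e) →
      (∀ e ∈ tb, (0 : ℕ) ∉ muFreeE e) →
      Reds (appSeq (Trm.mu 0 (.mvar 0 (appSeq (.app u (.tm (theta1 p))) p))) tb)
        (Trm.mu 0 (.mvar 0 (appSeq (.app u (.tm (theta1 (p ++ tb)))) (p ++ tb))))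
  | [], p, _, _ => by
      simpa [appSeq, Reds] using (Relation.ReflTransGen.refl :
        Reds (appSeq (Trm.mu 0 (.mvar 0 (appSeq (.app u (.tm (theta1 p))) p))) [])
          (appSeq (Trm.mu 0 (.mvar 0 (appSeq (.app u (.tm (theta1 p))) p))) []))
  | e :: tb, p, hp, htb => by
      have hstep :
          RedT (Trm.app (Trm.mu 0 (.mvar 0 (appSeq (.app u (.tm (theta1 p))) p))) e)
            (Trm.mu 0 (.mvar 0 (appSeq (.app u (.tm (theta1 (p ++ [e])))) (p ++ [e])))) := by
        have h1 := RedT.mu 0 (.mvar 0 (appSeq (.app u (.tm (theta1 p))) p)) e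
        have hmap : p.map (musubstE 0 e) = p := by
          conv_rhs => rw [← List.map_id p]
          exact List.map_congr_left (fun f hf => musubstE_of_not_free 0 e f (hp f hf))
        have htheta : musubstT 0 e (theta1 p) = theta1 (p ++ [e]) := by
          show Trm.lam 1 (musubstT 0 e (.mvar 0 (appSeq (.var 1) p))) = _
          show Trm.lam 1 (.mvar 0 (.app (musubstT 0 e (appSeq (.var 1) p)) e)) = _
          rw [musubstT_appSeq, hmap]
          show Trm.lam 1 (.mvar 0 (.app (appSeq (.var 1) p) e)) = _
          unfold theta1
          rw [appSeq_append]
          rfl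
        have h2 : musubstT 0 e (Trm.app u (.tm (theta1 p))) =
            Trm.app u (.tm (theta1 (p ++ [e]))) := by
          show Trm.app (musubstT 0 e u) (.tm (musubstT 0 e (theta1 p))) = _
          rw [musubstT_of_not_free 0 e u hu, htheta]
        have heq :
            musubstT 0 e (.mvar 0 (appSeq (.app u (.tm (theta1 p))) p)) =
            .mvar 0 (appSeq (.app u (.tm (theta1 (p ++ [e])))) (p ++ [e])) := by
          show Trm.mvar 0 (.app (musubstT 0 e (appSeq (.app u (.tm (theta1 p))) p)) e) = _
          rw [musubstT_appSeq, hmap, h2, appSeq_append]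
          rfl
        rw [heq] at h1
        exact h1
      have hrest := state_reds u hu tb (p ++ [e])
        (by intro f hf; rcases List.mem_append.mp hf with h | h
            · exact hp f h
            · rw [List.mem_singleton] at h; rw [h]
              exact htb e List.mem_cons_self)
        (fun f hf => htb f (List.mem_cons_of_mem e hf))
      have : appSeq (Trm.mu 0 (.mvar 0 (appSeq (.app u (.tm (theta1 p))) p))) (e :: tb)
          = appSeq (Trm.app (Trm.mu 0 (.mvar 0 (appSeq (.app u (.tm (theta1 p))) p))) e) tb := rfl
      rw [this]
      refine Relation.ReflTransGen.trans (reds_appSeq (Relation.ReflTransGen.single hstep) tb) ?_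
      simpa [List.append_assoc, Reds] using hrest

/-- For every term `u` and finite sequence `t̄` of E-terms (the bound variables `a`, `y`
of `𝒞₁` being fresh for `u` and `t̄`): `((𝒞₁ u) t̄) ▷* μa.(a ((u θ₁) t̄))` where
`θ₁ = λy.(a (y t̄))`, and for every term `v₁`, `(θ₁ v₁) ▷* (a (v₁ t̄))`. -/
theorem callcc_example_behavior (u : Trm) (tb : List Etrm)
    (hu : (0 : ℕ) ∉ muFreeT u)
    (htb : ∀ e ∈ tb, (0 : ℕ) ∉ muFreeE e ∧ (1 : ℕ) ∉ lamFreeE e) :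
    Reds (appSeq (Trm.app calC1 (.tm u)) tb)
        (Trm.mu 0 (.mvar 0 (appSeq (.app u (.tm (theta1 tb))) tb))) ∧
    ∀ v₁ : Trm,
      Reds (Trm.app (theta1 tb) (.tm v₁)) (Trm.mvar 0 (appSeq v₁ tb)) := by
  constructor
  · have hbeta : RedT (Trm.app calC1 (.tm u))
        (Trm.mu 0 (.mvar 0 (appSeq (.app u (.tm (theta1 []))) []))) := by
      have h := RedT.beta 0
        (.mu 0 (.mvar 0 (.app (.var 0) (.tm (.lam 1 (.mvar 0 (.var 1))))))) u
      simpa [calC1, theta1, appSeq, substT, substE] using h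
    refine Relation.ReflTransGen.trans
      (reds_appSeq (Relation.ReflTransGen.single hbeta) tb) ?_
    simpa [Reds] using state_reds u hu tb [] (by simp) (fun e he => (htb e he).1)
  · intro v₁
    have h := RedT.beta 1 (.mvar 0 (appSeq (.var 1) tb)) v₁
    have heq : substT 1 v₁ (.mvar 0 (appSeq (.var 1) tb)) = .mvar 0 (appSeq v₁ tb) := by
      show Trm.mvar 0 (substT 1 v₁ (appSeq (.var 1) tb)) = _
      rw [substT_appSeq]
      have hmap : tb.map (substE 1 v₁) = tb := by
        conv_rhs => rw [← List.map_id tb]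
        exact List.map_congr_left (fun f hf => substE_of_not_free 1 v₁ f (htb f hf).2)
      rw [hmap]
      rfl
    rw [heq] at h
    exact Relation.ReflTransGen.single h
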